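/- The octonion norm is multiplicative: for all octonions o₁, o₂ one has |o₁ o₂| = |o₁| |o₂|. -/

import Mathlib

noncomputable section

open MeasureTheory Real

/-- The octonions, realized via the Cayley–Dickson construction on the
quaternions: an octonion is a pair `(a, b)` of quaternions, thought of as
`a + b·e₄` with `e₄ = (0,1)`. -/
structure Octonion where
  q₁ : Quaternion ℝ
  q₂ : Quaternion ℝ

namespace Octonion

instance : Zero Octonion := ⟨⟨0, 0⟩⟩
instance : One Octonion := ⟨⟨1, 0⟩⟩
instance : Add Octonion := ⟨fun x y => ⟨x.q₁ + y.q₁, x.q₂ + y.q₂⟩⟩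
instance : Neg Octonion := ⟨fun x => ⟨-x.q₁, -x.q₂⟩⟩
instance : Sub Octonion := ⟨fun x y => ⟨x.q₁ - y.q₁, x.q₂ - y.q₂⟩⟩
instance : SMul ℝ Octonion := ⟨fun r x => ⟨r • x.q₁, r • x.q₂⟩⟩

/-- Cayley–Dickson multiplication: `(a,b)(c,d) = (ac − d̄b, da + b c̄)`. -/
instance : Mul Octonion :=
  ⟨fun x y => ⟨x.q₁ * y.q₁ - star y.q₂ * x.q₂, y.q₂ * x.q₁ + x.q₂ * star y.q₁⟩⟩

/-- Octonionic conjugation (negating all seven imaginary components). -/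
def conj (x : Octonion) : Octonion := ⟨star x.q₁, -x.q₂⟩

/-- Embedding of the quaternions into the octonions. -/
def ofQuat (a : Quaternion ℝ) : Octonion := ⟨a, 0⟩

/-- The imaginary unit `e₄ = (0, 1)`. -/
def e₄ : Octonion := ⟨0, 1⟩

def e₁ : Octonion := ofQuat ⟨0, 1, 0, 0⟩
def e₂ : Octonion := ofQuat ⟨0, 0, 1, 0⟩
def e₃ : Octonion := ofQuat ⟨0, 0, 0, 1⟩
def e₅ : Octonion := ⟨0, ⟨0, 1, 0, 0⟩⟩
def e₆ : Octonion := ⟨0, ⟨0, 0, 1, 0⟩⟩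
def e₇ : Octonion := ⟨0, ⟨0, 0, 0, 1⟩⟩

/-- The octonion norm `|o| = √(o · conj o)`: the Euclidean norm of the eight
real coefficients. -/
def norm (x : Octonion) : ℝ := Real.sqrt (‖x.q₁‖ ^ 2 + ‖x.q₂‖ ^ 2)

/-- `exp(μξ) = cos ξ + μ sin ξ` for an imaginary unit `μ`. -/
def oexp (μ : Octonion) (ξ : ℝ) : Octonion :=
  Real.cos ξ • (1 : Octonion) + Real.sin ξ • μ

end Octonion

open Octonion

/-- The octonion norm is multiplicative: `|o₁ o₂| = |o₁| |o₂|`. -/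
theorem octonion_norm_mul (o₁ o₂ : Octonion) :
    Octonion.norm (o₁ * o₂) = Octonion.norm o₁ * Octonion.norm o₂ := by
  have hsq : ∀ q : Quaternion ℝ, ‖q‖ ^ 2 = q.re ^ 2 + q.imI ^ 2 + q.imJ ^ 2 + q.imK ^ 2 := by
    intro q
    rw [sq, ← Quaternion.normSq_eq_norm_mul_self, Quaternion.normSq_def']
  have hm : o₁ * o₂ = ⟨o₁.q₁ * o₂.q₁ - star o₂.q₂ * o₁.q₂,
      o₂.q₂ * o₁.q₁ + o₁.q₂ * star o₂.q₁⟩ := rfl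
  unfold Octonion.norm
  rw [hm, ← Real.sqrt_mul (by positivity)]
  congr 1
  simp only [hsq, Quaternion.re_mul, Quaternion.imI_mul, Quaternion.imJ_mul, Quaternion.imK_mul,
    Quaternion.re_sub, Quaternion.imI_sub, Quaternion.imJ_sub, Quaternion.imK_sub,
    Quaternion.re_add, Quaternion.imI_add, Quaternion.imJ_add, Quaternion.imK_add,
    Quaternion.re_star, Quaternion.imI_star, Quaternion.imJ_star, Quaternion.imK_star]
  ring
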